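/- arXiv:2505.23293 — 2 statements merged into one kernel-verified Lean document; each statement's English description precedes it below -/
import Mathlib

section
/- In an apiculate partial cube, every antipodal subgraph is gated; that is, if A is a set of vertices such that every vertex v ∈ A has an antipode v̄ ∈ A with A = [v,v̄], then for every vertex u of the graph there exists a vertex u' ∈ A such that u' ∈ [u,v] for all v ∈ A. -/
open SimpleGraph

namespace Mediangle

/-- The interval `[u,v]` in a graph: vertices on shortest `u,v`-paths. -/
def interval {V : Type*} (G : SimpleGraph V) (u v : V) : Set V :=
  {x | G.dist u x + G.dist x v = G.dist u v}

/-- A set of vertices is convex if it contains the interval between any two of its vertices. -/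
def GConvex {V : Type*} (G : SimpleGraph V) (A : Set V) : Prop :=
  ∀ x ∈ A, ∀ y ∈ A, interval G x y ⊆ A

/-- A set `A` is gated: every vertex `u` has a gate `g ∈ A` with `g ∈ [u,v]` for all `v ∈ A`. -/
def IsGated {V : Type*} (G : SimpleGraph V) (A : Set V) : Prop :=
  ∀ u : V, ∃ g ∈ A, ∀ v ∈ A, g ∈ interval G u v

/-- A set `A` is antipodal: every `v ∈ A` has an antipode `w` with `A = [v,w]`. -/
def IsAntipodalSet {V : Type*} (G : SimpleGraph V) (A : Set V) : Prop :=
  ∀ v ∈ A, ∃ w ∈ A, A = interval G v w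

/-- A graph is antipodal if every vertex `v` has an antipode `w` with `V = [v,w]`. -/
def IsAntipodal {V : Type*} (G : SimpleGraph V) : Prop :=
  ∀ v : V, ∃ w : V, interval G v w = Set.univ

/-- A convex cycle: a cycle whose vertex set is convex. -/
def ConvexCycle {V : Type*} (G : SimpleGraph V) {a : V} (c : G.Walk a a) : Prop :=
  c.IsCycle ∧ GConvex G {v | v ∈ c.support}

/-- Bipartite mediangle graph: connected, bipartite, satisfying the Cycle Condition and
the Intersection of Convex Cycles condition. -/
def IsMediangle {V : Type*} (G : SimpleGraph V) : Prop :=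
  G.Connected ∧ G.Colorable 2 ∧
  (∀ u x y z : V, G.Adj z x → G.Adj z y → x ≠ y →
    G.dist u x + 1 = G.dist u z → G.dist u y + 1 = G.dist u z →
    ∃ c : G.Walk z z, ConvexCycle G c ∧ s(z, x) ∈ c.edges ∧ s(z, y) ∈ c.edges ∧
      c.getVert (c.length / 2) ∈ interval G u x ∩ interval G u y) ∧
  (∀ (a b : V) (c₁ : G.Walk a a) (c₂ : G.Walk b b),
    ConvexCycle G c₁ → ConvexCycle G c₂ →
    {v | v ∈ c₁.support} ≠ {v | v ∈ c₂.support} →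
    {e : Sym2 V | e ∈ c₁.edges ∧ e ∈ c₂.edges}.Subsingleton)

/-- A graph is apiculate if for every basepoint `u` and vertices `x, y` there is a unique
`⪯_u`-maximal vertex in `[u,x] ∩ [u,y]` (the `u`-apex relative to `x` and `y`). -/
def IsApiculate {V : Type*} (G : SimpleGraph V) : Prop :=
  ∀ u x y : V, ∃! a : V,
    a ∈ interval G u x ∩ interval G u y ∧
      ∀ b ∈ interval G u x ∩ interval G u y, a ∈ interval G u b → a = b

/-- The hypercube graph on the finite subsets of `U`: two finite subsets are adjacent iff
their symmetric difference has exactly one element. -/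
def cubeGraph (U : Type) : SimpleGraph (Finset U) where
  Adj A B := ∃ e : U, symmDiff (A : Set U) (B : Set U) = {e}
  symm := by
    constructor
    rintro A B ⟨e, h⟩
    exact ⟨e, by rwa [symmDiff_comm]⟩
  loopless := by
    constructor
    rintro A ⟨e, h⟩
    rw [symmDiff_self] at h
    exact Set.singleton_ne_empty e (h.symm.trans Set.bot_eq_empty)

/-- A partial cube: a connected graph admitting an isometric embedding into a hypercube. -/
def IsPartialCube {V : Type*} (G : SimpleGraph V) : Prop :=
  G.Connected ∧ ∃ (U : Type) (φ : V → Finset U),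
    ∀ u v : V, (cubeGraph U).dist (φ u) (φ v) = G.dist u v

/-! ### Sign vectors, COMs and OMs -/

/-- Sign vectors on a ground set `U`. -/
abbrev SignVec (U : Type*) := U → SignType

/-- Composition of sign vectors. -/
def sComp {U : Type*} (X Y : SignVec U) : SignVec U :=
  fun e => if X e ≠ 0 then X e else Y e

/-- Separator of two sign vectors. -/
def sep {U : Type*} (X Y : SignVec U) : Set U := {e | X e * Y e = -1}

/-- A Complex of Oriented Matroids: a system of sign vectors satisfying strong elimination
(SE) and face symmetry (FS). -/
structure IsCOM {U : Type*} (L : Set (SignVec U)) : Prop where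
  se : ∀ X ∈ L, ∀ Y ∈ L, ∀ e ∈ sep X Y,
        ∃ Z ∈ L, Z e = 0 ∧ ∀ f ∉ sep X Y, Z f = sComp X Y f
  fs : ∀ X ∈ L, ∀ Y ∈ L, sComp X (-Y) ∈ L

/-- A system of sign vectors is simple if every sign occurs in every coordinate. -/
def SimpleSys {U : Type*} (L : Set (SignVec U)) : Prop :=
  ∀ (e : U) (s : SignType), ∃ X ∈ L, X e = s

/-- The topes of a simple system: covectors with full support. -/
def topes {U : Type*} (L : Set (SignVec U)) : Set (SignVec U) :=
  {X ∈ L | ∀ e, X e ≠ 0}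

/-- The tope graph: vertices the topes, two topes adjacent iff their separator is a
singleton. -/
def topeGraph {U : Type*} (L : Set (SignVec U)) : SimpleGraph (topes L) where
  Adj X Y := ∃ e : U, sep X.1 Y.1 = {e}
  symm := by
    constructor
    rintro X Y ⟨e, h⟩
    refine ⟨e, ?_⟩
    rw [← h]
    ext f
    simp only [sep, Set.mem_setOf_eq, mul_comm]
  loopless := by
    constructor
    rintro ⟨X, hX⟩ ⟨e, h⟩
    have he : X e * X e = -1 := by
      have : e ∈ sep X X := by rw [h]; exact Set.mem_singleton e
      exact this
    cases hxe : X e <;> rw [hxe] at he <;> exact absurd he (by decide)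

/-- An oriented matroid: a COM containing the zero sign vector. -/
def IsOM {U : Type*} (L : Set (SignVec U)) : Prop :=
  IsCOM L ∧ (0 : SignVec U) ∈ L

/-- The partial order on sign vectors determined coordinatewise by `0 < -1` and `0 < +1`. -/
def signLE {U : Type*} (X Y : SignVec U) : Prop :=
  ∀ e, X e = 0 ∨ X e = Y e

/-- `L` contains a strict chain with `n + 1` elements (i.e., of length `n`). -/
def HasChainOfLength {U : Type*} (L : Set (SignVec U)) (n : ℕ) : Prop :=
  ∃ c : Fin (n + 1) → SignVec U, (∀ i, c i ∈ L) ∧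
    ∀ i j : Fin (n + 1), i < j → signLE (c i) (c j) ∧ c i ≠ c j

/-- `L` has rank `r`: the longest chain in `(L, ≤)` has length `r`. -/
def HasRank {U : Type*} (L : Set (SignVec U)) (r : ℕ) : Prop :=
  HasChainOfLength L r ∧ ∀ n : ℕ, HasChainOfLength L n → n ≤ r

/-- A simplicial oriented matroid: an OM of rank `r` in which every tope has degree exactly
`r` in the tope graph. -/
def IsSimplicialOM {U : Type*} (L : Set (SignVec U)) : Prop :=
  IsOM L ∧ ∃ r : ℕ, HasRank L r ∧
    ∀ T ∈ topes L, {Y ∈ topes L | ∃ e : U, sep T Y = {e}}.ncard = r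

/-- The imprint of a vertex `u` in a set `A`. -/
def imprint {V : Type*} (G : SimpleGraph V) (u : V) (A : Set V) : Set V :=
  {x ∈ A | interval G u x ∩ A = {x}}

end Mediangle

namespace Mediangle


/-! ### Auxiliary machinery for the proof -/

open scoped symmDiff

section Aux

variable {U : Type} [DecidableEq U]

private lemma card_add_card (s t : Finset U) :
    s.card + t.card = (s ∆ t).card + 2 * (s ∩ t).card := by
  have h1 : s ∆ t = (s \ t) ∪ (t \ s) := rfl
  have h2 : Disjoint (s \ t) (t \ s) := disjoint_sdiff_sdiff
  have h3 : (s ∆ t).card = (s \ t).card + (t \ s).card := by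
    rw [h1, Finset.card_union_of_disjoint h2]
  have h4 : (s \ t).card + (s ∩ t).card = s.card := by
    rw [Finset.card_sdiff_add_card_inter]
  have h5 : (t \ s).card + (t ∩ s).card = t.card := by
    rw [Finset.card_sdiff_add_card_inter]
  have h6 : (t ∩ s).card = (s ∩ t).card := by rw [Finset.inter_comm]
  omega

private lemma card_triple (X Y Z : Finset U) :
    (X ∆ Y).card + (Y ∆ Z).card = (X ∆ Z).card + 2 * ((X ∆ Y) ∩ (Y ∆ Z)).card := by
  have h := card_add_card (X ∆ Y) (Y ∆ Z)
  have h2 : (X ∆ Y) ∆ (Y ∆ Z) = X ∆ Z := by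
    rw [symmDiff_assoc, symmDiff_symmDiff_cancel_left]
  rw [h2] at h
  omega

private lemma cube_adj {A B : Finset U} :
    (cubeGraph U).Adj A B ↔ ∃ e, A ∆ B = {e} := by
  constructor
  · rintro ⟨e, he⟩
    refine ⟨e, ?_⟩
    rw [← Finset.coe_eq_singleton, Finset.coe_symmDiff]
    exact he
  · rintro ⟨e, he⟩
    exact ⟨e, by rw [← Finset.coe_symmDiff, he, Finset.coe_singleton]⟩

private lemma cube_walk : ∀ (n : ℕ) (A B : Finset U), (A ∆ B).card = n →
    ∃ w : (cubeGraph U).Walk A B, w.length = n := by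
  intro n
  induction n with
  | zero =>
    intro A B h
    obtain rfl : A = B := by
      have := Finset.card_eq_zero.mp h
      rwa [Finset.symmDiff_eq_empty] at this
    exact ⟨SimpleGraph.Walk.nil, rfl⟩
  | succ n ih =>
    intro A B h
    obtain ⟨e, he⟩ : ∃ e, e ∈ A ∆ B := by
      have : 0 < (A ∆ B).card := by omega
      exact (Finset.card_pos.mp this).exists_mem
    have hadj : (cubeGraph U).Adj A (A ∆ {e}) := by
      rw [cube_adj]
      exact ⟨e, by rw [symmDiff_symmDiff_cancel_left]⟩
    have hcard : ((A ∆ {e}) ∆ B).card = n := by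
      have h1 : (A ∆ {e}) ∆ B = (A ∆ B).erase e := by
        ext a
        rcases Finset.mem_symmDiff.mp he with ⟨h1, h2⟩ | ⟨h1, h2⟩ <;>
        · by_cases hae : a = e <;>
            simp only [Finset.mem_symmDiff, Finset.mem_erase, Finset.mem_singleton, hae] <;>
            tauto
      rw [h1, Finset.card_erase_of_mem he, h]
      omega
    obtain ⟨w, hw⟩ := ih (A ∆ {e}) B hcard
    exact ⟨SimpleGraph.Walk.cons hadj w, by simp [hw]⟩

private lemma cube_card_le_length {A B : Finset U} (w : (cubeGraph U).Walk A B) :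
    (A ∆ B).card ≤ w.length := by
  induction w with
  | nil => simp
  | @cons A C B h w ih =>
    have h1 : (A ∆ C).card = 1 := by
      obtain ⟨e, he⟩ := cube_adj.mp h
      rw [he, Finset.card_singleton]
    have h2 := card_triple A C B
    simp only [SimpleGraph.Walk.length_cons]
    omega

private lemma cube_dist (A B : Finset U) :
    (cubeGraph U).dist A B = (A ∆ B).card := by
  obtain ⟨w, hw⟩ := cube_walk _ A B rfl
  refine le_antisymm (hw ▸ SimpleGraph.dist_le w) ?_
  obtain ⟨p, hp⟩ := w.reachable.exists_walk_length_eq_dist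
  calc (A ∆ B).card ≤ p.length := cube_card_le_length p
    _ = _ := hp

private lemma singleton_inter_card_one {c : U} {s : Finset U} (h : (({c} : Finset U) ∩ s).card = 1) :
    c ∈ s := by
  by_contra hcn
  have hempty : ({c} : Finset U) ∩ s = ∅ := by
    ext b
    simp only [Finset.mem_inter, Finset.mem_singleton, Finset.notMem_empty, iff_false, not_and]
    rintro rfl
    exact hcn
  rw [hempty] at h
  simp at h

end Aux

section Metric

variable {V : Type*} {G : SimpleGraph V} {U : Type} [DecidableEq U] {φ : V → Finset U}

private lemma mem_interval {p q z : V} :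
    z ∈ interval G p q ↔ G.dist p z + G.dist z q = G.dist p q := Iff.rfl

private lemma dist0 (hc : G.Connected) {p q : V} : G.dist p q = 0 ↔ p = q := by
  rw [SimpleGraph.dist_eq_zero_iff_eq_or_not_reachable]
  simp [hc.preconnected p q]

private lemma symm4 (a b c : Finset U) : (a ∆ b) ∆ (a ∆ c) = b ∆ c := by
  rw [symmDiff_comm a b, symmDiff_assoc, symmDiff_symmDiff_cancel_left]

private lemma step (hc : G.Connected) {p q : V} (h : 0 < G.dist p q) :
    ∃ z, G.dist p z = 1 ∧ G.dist z q + 1 = G.dist p q := by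
  obtain ⟨w, hw⟩ := SimpleGraph.exists_walk_of_dist_ne_zero (by omega : G.dist p q ≠ 0)
  cases w with
  | nil => simp only [SimpleGraph.Walk.length_nil] at hw; omega
  | @cons _ z _ h' w' =>
    refine ⟨z, SimpleGraph.dist_eq_one_iff_adj.mpr h', ?_⟩
    have h1 : G.dist z q ≤ w'.length := SimpleGraph.dist_le w'
    have h2 : G.dist p q ≤ G.dist p z + G.dist z q := hc.dist_triangle
    have h3 : G.dist p z = 1 := SimpleGraph.dist_eq_one_iff_adj.mpr h'
    simp only [SimpleGraph.Walk.length_cons] at hw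
    omega

variable (hd : ∀ p q, G.dist p q = (φ p ∆ φ q).card)

include hd

private lemma dist_key (p q z : V) :
    G.dist p q + G.dist q z = G.dist p z + 2 * ((φ p ∆ φ q) ∩ (φ q ∆ φ z)).card := by
  rw [hd, hd, hd]; exact card_triple _ _ _

private lemma bet_card {p q z : V} (h : z ∈ interval G p q) :
    ((φ p ∆ φ z) ∩ (φ z ∆ φ q)).card = 0 := by
  have h1 := dist_key hd p z q
  rw [mem_interval] at h
  omega

private lemma bet_sub {p q z : V} (h : z ∈ interval G p q) :
    φ p ∆ φ z ⊆ φ p ∆ φ q := by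
  have h0 := bet_card hd h
  rw [Finset.card_eq_zero] at h0
  intro a ha
  have h1 : φ p ∆ φ q = (φ p ∆ φ z) ∆ (φ z ∆ φ q) := by
    rw [symmDiff_assoc, symmDiff_symmDiff_cancel_left]
  rw [h1, Finset.mem_symmDiff]
  left
  refine ⟨ha, fun hb => ?_⟩
  have : a ∈ (φ p ∆ φ z) ∩ (φ z ∆ φ q) := Finset.mem_inter.mpr ⟨ha, hb⟩
  simp [h0] at this

omit hd in
private lemma bet_trans (hc : G.Connected) {p w q z : V} (hz : z ∈ interval G p w)
    (hw : w ∈ interval G p q) : z ∈ interval G p q := by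
  rw [mem_interval] at *
  have t1 := hc.dist_triangle (u := p) (v := z) (w := q)
  have t2 := hc.dist_triangle (u := z) (v := w) (w := q)
  omega

private lemma finite_interval (hc : G.Connected) (p q : V) : (interval G p q).Finite := by
  have hinj : Function.Injective φ := by
    intro a b hab
    have : G.dist a b = 0 := by rw [hd]; simp [hab]
    exact (dist0 hc).mp this
  have hsub : interval G p q ⊆ φ ⁻¹' ↑((φ p ∆ φ q).powerset.image (fun s => φ p ∆ s)) := by
    intro z hz
    simp only [Set.mem_preimage, Finset.coe_image, Set.mem_image, Finset.mem_coe,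
      Finset.mem_powerset]
    exact ⟨φ p ∆ φ z, bet_sub hd hz, by rw [symmDiff_symmDiff_cancel_left]⟩
  exact (Set.Finite.preimage hinj.injOn (Finset.finite_toSet _)).subset hsub

private lemma apex (hc : G.Connected) (hap : IsApiculate G) (p x y : V) :
    ∃ a ∈ interval G p x ∩ interval G p y,
      ∀ b ∈ interval G p x ∩ interval G p y, b ∈ interval G p a := by
  obtain ⟨a, ha, huniq⟩ := hap p x y
  refine ⟨a, ha.1, fun b hb => ?_⟩
  set I := interval G p x ∩ interval G p y with hI
  set Z := {w | w ∈ I ∧ b ∈ interval G p w} with hZ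
  have hZfin : Z.Finite := ((finite_interval hd hc p x).subset
    (fun w hw => hw.1.1)).subset (fun w hw => hw)
  have hbb : b ∈ interval G p b := by rw [mem_interval]; simp [SimpleGraph.dist_self]
  have hZne : Z.Nonempty := ⟨b, hb, hbb⟩
  obtain ⟨z, hzZ, hzmax⟩ := Set.Finite.exists_maximalFor (G.dist p) Z hZfin hZne
  have hzmaxI : ∀ w ∈ I, z ∈ interval G p w → z = w := by
    intro w hwI hzw
    have hbw : b ∈ interval G p w := bet_trans hc hzZ.2 hzw
    have hwZ : w ∈ Z := ⟨hwI, hbw⟩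
    have hle : G.dist p z ≤ G.dist p w := by
      rw [mem_interval] at hzw; omega
    have heq := hzmax (j := w) hwZ hle
    have : G.dist z w = 0 := by rw [mem_interval] at hzw; omega
    exact (dist0 hc).mp this
  have : z = a := huniq z ⟨hzZ.1, hzmaxI⟩
  exact this ▸ hzZ.2

end Metric


set_option maxHeartbeats 2000000 in
/-- In an apiculate partial cube, every (nonempty) antipodal subgraph is
gated: if every `v ∈ A` has an antipode `v̄` with `A = [v, v̄]`, then every vertex `u` has a
gate `u' ∈ A` with `u' ∈ [u, v]` for all `v ∈ A`. -/
theorem antipodal_isGated_of_apiculate {V : Type*} (G : SimpleGraph V)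
    (hpc : IsPartialCube G) (hap : IsApiculate G)
    (A : Set V) (hA : A.Nonempty) (hant : IsAntipodalSet G A) :
    IsGated G A := by
  classical
  obtain ⟨hc, U, φ, hiso⟩ := hpc
  have hd : ∀ p q : V, G.dist p q = (φ p ∆ φ q).card := by
    intro p q; rw [← hiso p q, cube_dist]
  obtain ⟨v₀, hv₀⟩ := hA
  obtain ⟨w₀, hw₀, hA₀⟩ := hant v₀ hv₀
  have hAfin : A.Finite := by
    rw [hA₀]; exact finite_interval hd hc v₀ w₀
  have main : ∀ m : ℕ, ∀ u v : V, v ∈ A → G.dist u v = m →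
      (∀ z ∈ A, m ≤ G.dist u z) → ∃ g ∈ A, ∀ z ∈ A, g ∈ interval G u z := by
    intro m
    induction m using Nat.strong_induction_on with
    | _ m IH =>
      intro u v hv hdv hmin
      rcases Nat.eq_zero_or_pos m with hm | hm
      · subst hm
        obtain rfl : u = v := (dist0 hc).mp hdv
        refine ⟨u, hv, fun z hz => ?_⟩
        have h0 : G.dist u u = 0 := SimpleGraph.dist_self
        rw [mem_interval]; omega
      obtain ⟨u', hu'1, hu'v⟩ := step hc (by omega : 0 < G.dist u v)
      set k := m - 1 with hk
      have hdv' : G.dist u' v = k := by omega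
      have hmin' : ∀ z ∈ A, k ≤ G.dist u' z := by
        intro z hz
        have t1 := hc.dist_triangle (u := u) (v := u') (w := z)
        have t2 := hmin z hz
        omega
      obtain ⟨g, hgA, hg0⟩ := IH k (by omega) u' v hv hdv' hmin'
      have hgv : g = v := by
        have h1 := (mem_interval).mp (hg0 v hv)
        have h2 := hmin' g hgA
        have h3 : G.dist g v = 0 := by omega
        exact (dist0 hc).mp h3
      subst hgv
      by_cases hall : ∀ z ∈ A, g ∈ interval G u z
      · exact ⟨g, hgA, hall⟩
      exfalso
      push_neg at hall
      obtain ⟨x₀, hx₀A, hx₀⟩ := hall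
      -- rename g to v for clarity: g IS v here (g = v was substituted)
      have hg : ∀ z ∈ A, k + G.dist g z = G.dist u' z := by
        intro z hz
        have h1 := (mem_interval).mp (hg0 z hz)
        omega
      have hduv : G.dist u g = k + 1 := by omega
      have hdu'u : G.dist u' u = 1 := by rw [SimpleGraph.dist_comm]; exact hu'1
      have hdich : ∀ z ∈ A, G.dist u z = (k+1) + G.dist g z ∨
          G.dist u z + 1 = k + G.dist g z := by
        intro z hz
        have h1 := hg z hz
        have t1 := hc.dist_triangle (u := u) (v := u') (w := z)
        have t2 := hc.dist_triangle (u := u') (v := u) (w := z)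
        have hpar := dist_key hd u u' z
        omega
      have hkey : ∀ z : V, (k+1) + G.dist g z
          = G.dist u z + 2 * ((φ u ∆ φ g) ∩ (φ g ∆ φ z)).card := by
        intro z
        have h1 := dist_key hd u g z
        omega
      set B := {z | z ∈ A ∧ G.dist u z + 1 = k + G.dist g z} with hB
      have hx₀B : x₀ ∈ B := by
        refine ⟨hx₀A, ?_⟩
        rcases hdich x₀ hx₀A with h | h
        · exact absurd (by rw [mem_interval]; omega : g ∈ interval G u x₀) hx₀
        · exact h
      obtain ⟨x, hxB, hxmin⟩ := Set.exists_min_image B (G.dist g)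
        (hAfin.subset (fun z hz => hz.1)) ⟨x₀, hx₀B⟩
      obtain ⟨hxA, hxbad⟩ := hxB
      have hminx : m ≤ G.dist u x := hmin x hxA
      have ht2 : 2 ≤ G.dist g x := by omega
      obtain ⟨y, hxy, hyv⟩ := step hc (p := x) (q := g)
        (by rw [SimpleGraph.dist_comm]; omega)
      have hvy : G.dist g y + 1 = G.dist g x := by
        have c1 : G.dist g y = G.dist y g := SimpleGraph.dist_comm
        have c3 : G.dist g x = G.dist x g := SimpleGraph.dist_comm
        omega
      have hyx : y ∈ interval G g x := by
        rw [mem_interval]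
        have c2 : G.dist y x = G.dist x y := SimpleGraph.dist_comm
        omega
      obtain ⟨vb, hvbA, hAv⟩ := hant g hgA
      have hxI : x ∈ interval G g vb := by rw [← hAv]; exact hxA
      have hyI : y ∈ interval G g vb := bet_trans hc hyx hxI
      have hyA : y ∈ A := by rw [hAv]; exact hyI
      have hygood : G.dist u y = (k+1) + G.dist g y := by
        rcases hdich y hyA with h | h
        · exact h
        · exfalso
          have h2 := hxmin y ⟨hyA, h⟩
          omega
      have hx1 : ((φ u ∆ φ g) ∩ (φ g ∆ φ x)).card = 1 := by
        have h1 := hkey x; omega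
      obtain ⟨d₀, hd₀⟩ := Finset.card_eq_one.mp hx1
      have hd₀mem : d₀ ∈ (φ u ∆ φ g) ∩ (φ g ∆ φ x) := by
        rw [hd₀]; exact Finset.mem_singleton_self d₀
      have hd₀D : d₀ ∈ φ u ∆ φ g := (Finset.mem_inter.mp hd₀mem).1
      have hd₀x : d₀ ∈ φ g ∆ φ x := (Finset.mem_inter.mp hd₀mem).2
      have hy0 : ((φ u ∆ φ g) ∩ (φ g ∆ φ y)).card = 0 := by
        have h1 := hkey y; omega
      have hy0' := Finset.card_eq_zero.mp hy0
      have hysub : φ g ∆ φ y ⊆ φ g ∆ φ x := bet_sub hd hyx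
      have hSy : φ g ∆ φ y = (φ g ∆ φ x).erase d₀ := by
        apply Finset.eq_of_subset_of_card_le
        · intro a ha
          rw [Finset.mem_erase]
          refine ⟨fun hae => ?_, hysub ha⟩
          subst hae
          have hmem : a ∈ (φ u ∆ φ g) ∩ (φ g ∆ φ y) := Finset.mem_inter.mpr ⟨hd₀D, ha⟩
          simp [hy0'] at hmem
        · rw [Finset.card_erase_of_mem hd₀x]
          have e1 : G.dist g y = (φ g ∆ φ y).card := hd g y
          have e2 : G.dist g x = (φ g ∆ φ x).card := hd g x
          omega
      obtain ⟨yb, hybA, hAy⟩ := hant y hyA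
      have hvIy : g ∈ interval G y yb := by rw [← hAy]; exact hgA
      have hvbIy : vb ∈ interval G y yb := by rw [← hAy]; exact hvbA
      have hSybsub : φ g ∆ φ yb ⊆ φ g ∆ φ vb := bet_sub hd (by rw [← hAv]; exact hybA)
      have hdisj1 := Finset.card_eq_zero.mp (bet_card hd hvIy)
      have hdisj2 := Finset.card_eq_zero.mp (bet_card hd hvbIy)
      have hSyb : φ g ∆ φ yb = (φ g ∆ φ vb) \ (φ g ∆ φ y) := by
        ext a
        constructor
        · intro ha
          rw [Finset.mem_sdiff]
          refine ⟨hSybsub ha, fun ha2 => ?_⟩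
          have hmem : a ∈ (φ y ∆ φ g) ∩ (φ g ∆ φ yb) :=
            Finset.mem_inter.mpr ⟨by rwa [symmDiff_comm], ha⟩
          simp [hdisj1] at hmem
        · intro ha
          rw [Finset.mem_sdiff] at ha
          by_contra hnot
          have h1 : a ∈ φ y ∆ φ vb := by
            have he : φ y ∆ φ vb = (φ g ∆ φ y) ∆ (φ g ∆ φ vb) := (symm4 _ _ _).symm
            rw [he, Finset.mem_symmDiff]
            right; exact ⟨ha.1, ha.2⟩
          have h2 : a ∈ φ vb ∆ φ yb := by
            have he : φ vb ∆ φ yb = (φ g ∆ φ vb) ∆ (φ g ∆ φ yb) := (symm4 _ _ _).symm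
            rw [he, Finset.mem_symmDiff]
            left; exact ⟨ha.1, hnot⟩
          have hmem : a ∈ (φ y ∆ φ vb) ∩ (φ vb ∆ φ yb) := Finset.mem_inter.mpr ⟨h1, h2⟩
          simp [hdisj2] at hmem
      have hd₀E : d₀ ∈ φ g ∆ φ vb := bet_sub hd hxI hd₀x
      have hd₀y : d₀ ∉ φ g ∆ φ y := by
        rw [hSy]; exact fun h => (Finset.mem_erase.mp h).1 rfl
      have hd₀yb : d₀ ∈ φ g ∆ φ yb := by rw [hSyb, Finset.mem_sdiff]; exact ⟨hd₀E, hd₀y⟩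
      have hybbad : G.dist u yb + 1 = k + G.dist g yb := by
        rcases hdich yb hybA with h | h
        · exfalso
          have h0 : ((φ u ∆ φ g) ∩ (φ g ∆ φ yb)).card = 0 := by
            have h1 := hkey yb; omega
          rw [Finset.card_eq_zero] at h0
          have hmem : d₀ ∈ (φ u ∆ φ g) ∩ (φ g ∆ φ yb) := Finset.mem_inter.mpr ⟨hd₀D, hd₀yb⟩
          simp [h0] at hmem
        · exact h
      -- intersection of the two "S" sets is exactly {d₀}
      have h3 : (φ g ∆ φ x) ∩ (φ g ∆ φ yb) = {d₀} := by
        ext a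
        simp only [Finset.mem_inter, Finset.mem_singleton]
        constructor
        · rintro ⟨h4, h5⟩
          by_contra hne
          rw [hSyb, Finset.mem_sdiff] at h5
          exact h5.2 (by rw [hSy, Finset.mem_erase]; exact ⟨hne, h4⟩)
        · rintro rfl; exact ⟨hd₀x, hd₀yb⟩
      -- the apex a of (u', x, yb)
      obtain ⟨a, haI, hamax⟩ := apex hd hc hap u' x yb
      have hdu'x : G.dist u' x = k + G.dist g x := (hg x hxA).symm
      have hdu'yb : G.dist u' yb = k + G.dist g yb := (hg yb hybA).symm
      have huIx : u ∈ interval G u' x := by rw [mem_interval]; omega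
      have huIyb : u ∈ interval G u' yb := by rw [mem_interval]; omega
      have hvIx : g ∈ interval G u' x := hg0 x hxA
      have hvIyb : g ∈ interval G u' yb := hg0 yb hybA
      have hua := (mem_interval).mp (hamax u ⟨huIx, huIyb⟩)
      have hva := (mem_interval).mp (hamax g ⟨hvIx, hvIyb⟩)
      have hsub1 : φ u' ∆ φ a ⊆ (φ u' ∆ φ x) ∩ (φ u' ∆ φ yb) :=
        fun e he => Finset.mem_inter.mpr ⟨bet_sub hd haI.1 he, bet_sub hd haI.2 he⟩
      have hbound : G.dist u' a ≤ ((φ u' ∆ φ x) ∩ (φ u' ∆ φ yb)).card := by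
        rw [hd]; exact Finset.card_le_card hsub1
      have hcc : (φ u' ∆ φ x).card + (φ u' ∆ φ yb).card
          = (φ x ∆ φ yb).card + 2 * ((φ u' ∆ φ x) ∩ (φ u' ∆ φ yb)).card := by
        have h2 := card_add_card (φ u' ∆ φ x) (φ u' ∆ φ yb)
        rw [symm4] at h2
        exact h2
      have hxyb : (φ x ∆ φ yb).card + 2 = (φ g ∆ φ x).card + (φ g ∆ φ yb).card := by
        have h2 := card_add_card (φ g ∆ φ x) (φ g ∆ φ yb)
        rw [symm4, h3, Finset.card_singleton] at h2
        omega
      have e1 : G.dist u' x = (φ u' ∆ φ x).card := hd u' x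
      have e2 : G.dist u' yb = (φ u' ∆ φ yb).card := hd u' yb
      have e3 : G.dist g x = (φ g ∆ φ x).card := hd g x
      have e4 : G.dist g yb = (φ g ∆ φ yb).card := hd g yb
      have hdva : G.dist g a = 1 := by
        have hvane : G.dist g a ≠ 0 := by
          intro h0
          obtain rfl : g = a := (dist0 hc).mp h0
          omega
        omega
      have hdu'a : G.dist u' a = k + 1 := by omega
      have hdua : G.dist u a = k := by omega
      have hFa : (φ g ∆ φ a).card = 1 := by rw [← hd]; exact hdva
      obtain ⟨c, hc₀⟩ := Finset.card_eq_one.mp hFa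
      have hdax : G.dist a x + 1 = G.dist g x := by
        have h4 := (mem_interval).mp haI.1
        omega
      have hdvyb1 : 1 ≤ G.dist g yb := by
        rw [e4]
        exact Finset.card_pos.mpr ⟨d₀, hd₀yb⟩
      have hdayb : G.dist a yb + 1 = G.dist g yb := by
        have h4 := (mem_interval).mp haI.2
        omega
      have hcx : c ∈ φ g ∆ φ x := by
        have h1 : φ a ∆ φ x = (φ g ∆ φ a) ∆ (φ g ∆ φ x) := (symm4 _ _ _).symm
        have h2 := card_add_card (φ g ∆ φ a) (φ g ∆ φ x)
        have ea : G.dist a x = (φ a ∆ φ x).card := hd a x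
        rw [h1] at ea
        have hicard : ((φ g ∆ φ a) ∩ (φ g ∆ φ x)).card = 1 := by omega
        rw [hc₀] at hicard
        exact singleton_inter_card_one hicard
      have hcyb : c ∈ φ g ∆ φ yb := by
        have h1 : φ a ∆ φ yb = (φ g ∆ φ a) ∆ (φ g ∆ φ yb) := (symm4 _ _ _).symm
        have h2 := card_add_card (φ g ∆ φ a) (φ g ∆ φ yb)
        have ea : G.dist a yb = (φ a ∆ φ yb).card := hd a yb
        rw [h1] at ea
        have hicard : ((φ g ∆ φ a) ∩ (φ g ∆ φ yb)).card = 1 := by omega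
        rw [hc₀] at hicard
        exact singleton_inter_card_one hicard
      have hcd₀ : c = d₀ := by
        have hmem : c ∈ (φ g ∆ φ x) ∩ (φ g ∆ φ yb) := Finset.mem_inter.mpr ⟨hcx, hcyb⟩
        rw [h3, Finset.mem_singleton] at hmem
        exact hmem
      have havb : φ a ∆ φ vb = (φ g ∆ φ vb).erase d₀ := by
        have h1 : φ a ∆ φ vb = (φ g ∆ φ a) ∆ (φ g ∆ φ vb) := (symm4 _ _ _).symm
        rw [h1, hc₀, hcd₀]
        ext b
        constructor
        · intro hb
          rcases Finset.mem_symmDiff.mp hb with ⟨h1', h2'⟩ | ⟨h1', h2'⟩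
          · rw [Finset.mem_singleton] at h1'
            subst h1'
            exact absurd hd₀E h2'
          · exact Finset.mem_erase.mpr ⟨by simpa using h2', h1'⟩
        · intro hb
          obtain ⟨hne, hbE⟩ := Finset.mem_erase.mp hb
          exact Finset.mem_symmDiff.mpr (Or.inr ⟨hbE, by simpa using hne⟩)
      have hdavb : G.dist a vb + 1 = G.dist g vb := by
        rw [hd a vb, hd g vb, havb, Finset.card_erase_of_mem hd₀E]
        have hpos : 0 < (φ g ∆ φ vb).card := Finset.card_pos.mpr ⟨d₀, hd₀E⟩
        omega
      have haA : a ∈ A := by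
        rw [hAv, mem_interval]
        omega
      have hcon := hmin a haA
      omega
  intro u
  obtain ⟨v, hvA, hvmin⟩ := Set.exists_min_image A (G.dist u) hAfin ⟨v₀, hv₀⟩
  exact main (G.dist u v) u v hvA rfl hvmin

end Mediangle
end

section
/- If a system of sign vectors (U,L) satisfies the strong elimination axiom (SE) and the face symmetry axiom (FS), then L is closed under composition: for all X,Y ∈ L, the composition X∘Y belongs to L. -/
open SimpleGraph

namespace Mediangle

/-- If a system of sign vectors satisfies (SE) and (FS), then it is closed
under composition. -/
theorem closed_under_composition_of_SE_FS {U : Type*} (L : Set (SignVec U))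
    (hse : ∀ X ∈ L, ∀ Y ∈ L, ∀ e ∈ sep X Y,
      ∃ Z ∈ L, Z e = 0 ∧ ∀ f ∉ sep X Y, Z f = sComp X Y f)
    (hfs : ∀ X ∈ L, ∀ Y ∈ L, sComp X (-Y) ∈ L) :
    ∀ X ∈ L, ∀ Y ∈ L, sComp X Y ∈ L := by
  intro X hX Y hY
  have h := hfs X hX _ (hfs X hX Y hY)
  have : sComp X (-(sComp X (-Y))) = sComp X Y := by
    funext e
    simp only [sComp, Pi.neg_apply]
    by_cases he : X e = 0 <;> simp [he]
  rwa [this] at h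

end Mediangle
end
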